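/- Let \omega_1,...,\omega_s \in [0,1) be distinct, x_1,...,x_s nonzero, L \ge s, M-L+1 \ge s, and define H_1 = \Phi^{L-1} X (\Phi^{M-L})^T, H_2 = \Phi^{L-1} \Lambda X (\Phi^{M-L})^T as above. If \Psi is any rank-s matrix with H_2 = H_1 \Psi, then the set of nonzero eigenvalues of \Psi is exactly \{e^{-2\pi i \omega_1}, ..., e^{-2\pi i \omega_s}\}. -/

import Mathlib

open scoped Real BigOperators
open Matrix

/-- The `(N+1) × s` Vandermonde matrix with entries `e^{-2πi ω_j k}`. -/
noncomputable def vmat (s : ℕ) (ω : Fin s → ℝ) (N : ℕ) : Matrix (Fin (N + 1)) (Fin s) ℂ :=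
  Matrix.of fun k j => Complex.exp (-(2 * Real.pi * Complex.I * (ω j) * (k : ℕ)))

lemma vmat_apply (s : ℕ) (ω : Fin s → ℝ) (N : ℕ) (k : Fin (N+1)) (j : Fin s) :
    vmat s ω N k j = Complex.exp (-(2 * Real.pi * Complex.I * ω j)) ^ (k : ℕ) := by
  rw [vmat, Matrix.of_apply, ← Complex.exp_nat_mul]
  ring_nf

lemma lam_inj (s : ℕ) (ω : Fin s → ℝ) (hω : ∀ j, ω j ∈ Set.Ico (0 : ℝ) 1)
    (hinj : Function.Injective ω) :
    Function.Injective (fun j => Complex.exp (-(2 * Real.pi * Complex.I * ω j))) := by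
  intro a b hab
  simp only [Complex.exp_eq_exp_iff_exists_int] at hab
  obtain ⟨n, hn⟩ := hab
  apply hinj
  have h2 : -(2 * (Real.pi : ℂ) * Complex.I * ω a) - -(2 * Real.pi * Complex.I * ω b)
      = n * (2 * Real.pi * Complex.I) := by rw [hn]; ring
  have h3 : ((ω b : ℂ) - ω a) = n := by
    have hpi : (2 * (Real.pi : ℂ) * Complex.I) ≠ 0 := by
      simp [Real.pi_ne_zero, Complex.I_ne_zero]
    field_simp at h2
    have : ((ω b : ℂ) - ω a) * (2 * Real.pi * Complex.I) = n * (2 * Real.pi * Complex.I) := by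
      linear_combination (2 * (Real.pi : ℂ) * Complex.I) * h2
    exact mul_right_cancel₀ hpi this
  have h4 : ω b - ω a = (n : ℝ) := by
    have := congrArg Complex.re h3
    simpa using this
  have ha := hω a; have hb := hω b
  simp only [Set.mem_Ico] at ha hb
  have h5 : -1 < (n:ℝ) := by rw [← h4]; linarith
  have h6 : (n:ℝ) < 1 := by rw [← h4]; linarith
  have hn0 : n = 0 := by
    have h5' : (-1 : ℤ) < n := by exact_mod_cast h5
    have h6' : n < (1 : ℤ) := by exact_mod_cast h6
    omega
  rw [hn0] at h4
  simp at h4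
  linarith

lemma vmat_mulVec_inj (s : ℕ) (ω : Fin s → ℝ) (hω : ∀ j, ω j ∈ Set.Ico (0 : ℝ) 1)
    (hinj : Function.Injective ω) (N : ℕ) (hs : s ≤ N + 1) :
    Function.Injective (vmat s ω N).mulVec := by
  set lam := fun j => Complex.exp (-(2 * Real.pi * Complex.I * ω j)) with hlam
  have hlaminj : Function.Injective lam := lam_inj s ω hω hinj
  set S : Matrix (Fin s) (Fin s) ℂ := (vmat s ω N).submatrix (Fin.castLE hs) id with hS
  have hSv : S = (Matrix.vandermonde lam)ᵀ := by
    ext i j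
    simp [hS, vmat_apply, Matrix.vandermonde, hlam]
  have hdet : S.det ≠ 0 := by
    rw [hSv, Matrix.det_transpose]
    exact Matrix.det_vandermonde_ne_zero_iff.mpr hlaminj
  have hSinj : Function.Injective S.mulVec :=
    Matrix.mulVec_injective_iff_isUnit.mpr
      ((Matrix.isUnit_iff_isUnit_det S).mpr (isUnit_iff_ne_zero.mpr hdet))
  intro c d hcd
  apply hSinj
  funext i
  have := congrFun hcd (Fin.castLE hs i)
  simpa [hS, Matrix.mulVec, dotProduct] using this

lemma mul_left_cancel_of_mulVec_inj {m n p : Type*} [Fintype n] [Fintype m]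
    {A : Matrix m n ℂ} (hA : Function.Injective A.mulVec)
    {C D : Matrix n p ℂ} (h : A * C = A * D) : C = D := by
  ext i j
  have hcol : A.mulVec (fun k => C k j) = A.mulVec (fun k => D k j) := by
    funext i'
    have := congrFun (congrFun h i') j
    simpa [Matrix.mul_apply, Matrix.mulVec, dotProduct] using this
  exact congrFun (hA hcol) i

lemma spec_iff (n : ℕ) (Ψ : Matrix (Fin n) (Fin n) ℂ) (μ : ℂ) :
    μ ∈ spectrum ℂ Ψ ↔ ∃ v, v ≠ 0 ∧ Ψᵀ.mulVec v = μ • v := by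
  rw [spectrum.mem_iff, Matrix.isUnit_iff_isUnit_det, isUnit_iff_ne_zero, not_ne_iff,
    ← Matrix.exists_vecMul_eq_zero_iff]
  have key : ∀ v : Fin n → ℂ, v ᵥ* ((algebraMap ℂ (Matrix (Fin n) (Fin n) ℂ)) μ - Ψ)
      = μ • v - Ψᵀ.mulVec v := by
    intro v
    rw [Matrix.vecMul_sub, Matrix.mulVec_transpose, Algebra.algebraMap_eq_smul_one]
    rw [Matrix.smul_one_eq_diagonal]
    funext i
    simp [Matrix.vecMul_diagonal, mul_comm]
  constructor
  · rintro ⟨v, hv, h⟩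
    refine ⟨v, hv, ?_⟩
    rw [key v, sub_eq_zero] at h
    exact h.symm
  · rintro ⟨v, hv, h⟩
    exact ⟨v, hv, by rw [key v, h, sub_self]⟩

theorem stmt4 (s M L : ℕ) (ω : Fin s → ℝ) (hω : ∀ j, ω j ∈ Set.Ico (0 : ℝ) 1)
    (hinj : Function.Injective ω) (x : Fin s → ℂ) (hx : ∀ j, x j ≠ 0)
    (hLs : s ≤ L) (hMLs : s ≤ M - L + 1)
    (H1 H2 : Matrix (Fin (L - 1 + 1)) (Fin (M - L + 1)) ℂ)
    (hH1 : H1 = vmat s ω (L - 1) * Matrix.diagonal x * (vmat s ω (M - L))ᵀ)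
    (hH2 : H2 = vmat s ω (L - 1) *
      Matrix.diagonal (fun j => Complex.exp (-(2 * Real.pi * Complex.I * ω j))) *
      Matrix.diagonal x * (vmat s ω (M - L))ᵀ)
    (Ψ : Matrix (Fin (M - L + 1)) (Fin (M - L + 1)) ℂ)
    (hrank : Ψ.rank = s) (hΨ : H2 = H1 * Ψ) :
    {μ : ℂ | μ ≠ 0 ∧ μ ∈ spectrum ℂ Ψ} =
      Set.range fun j => Complex.exp (-(2 * Real.pi * Complex.I * ω j)) := by
  set lam := fun j => Complex.exp (-(2 * Real.pi * Complex.I * ω j)) with hlamdef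
  set A := vmat s ω (L - 1) with hAdef
  set B := vmat s ω (M - L) with hBdef
  set Λ := Matrix.diagonal lam with hΛdef
  set X := Matrix.diagonal x with hXdef
  have hlam_ne : ∀ j, lam j ≠ 0 := fun j => Complex.exp_ne_zero _
  have hAinj : Function.Injective A.mulVec :=
    vmat_mulVec_inj s ω hω hinj (L - 1) (by omega)
  have hBinj : Function.Injective B.mulVec :=
    vmat_mulVec_inj s ω hω hinj (M - L) (by omega)
  -- Step 1: Ψᵀ * B = B * Λ
  have hXunit : IsUnit X := by
    rw [Matrix.isUnit_iff_isUnit_det, hXdef, Matrix.det_diagonal, isUnit_iff_ne_zero]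
    exact Finset.prod_ne_zero_iff.mpr fun j _ => hx j
  have step1 : Ψᵀ * B = B * Λ := by
    have h0 : A * (Λ * (X * Bᵀ)) = A * (X * (Bᵀ * Ψ)) := by
      have := hΨ
      rw [hH1, hH2] at this
      calc A * (Λ * (X * Bᵀ)) = A * Λ * X * Bᵀ := by
            simp only [Matrix.mul_assoc]
        _ = A * X * Bᵀ * Ψ := this
        _ = A * (X * (Bᵀ * Ψ)) := by simp only [Matrix.mul_assoc]
    have h1 : Λ * (X * Bᵀ) = X * (Bᵀ * Ψ) := mul_left_cancel_of_mulVec_inj hAinj h0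
    have hcomm : X * Λ = Λ * X := by
      rw [hXdef, hΛdef, Matrix.diagonal_mul_diagonal, Matrix.diagonal_mul_diagonal]
      exact congrArg Matrix.diagonal (funext fun i => mul_comm (x i) (lam i))
    have h2 : X * (Λ * Bᵀ) = X * (Bᵀ * Ψ) := by
      rw [← Matrix.mul_assoc, hcomm, Matrix.mul_assoc, h1]
    have hXvecinj : Function.Injective X.mulVec :=
      Matrix.mulVec_injective_iff_isUnit.mpr hXunit
    have h3 : Λ * Bᵀ = Bᵀ * Ψ := mul_left_cancel_of_mulVec_inj hXvecinj h2
    have h4 := congrArg Matrix.transpose h3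
    rw [Matrix.transpose_mul, Matrix.transpose_mul, Matrix.transpose_transpose,
      hΛdef, Matrix.diagonal_transpose] at h4
    exact h4.symm
  -- Λ acts diagonally
  have hΛvec : ∀ c : Fin s → ℂ, Λ.mulVec c = fun i => lam i * c i := by
    intro c; funext i; rw [hΛdef, Matrix.mulVec_diagonal]
  -- key intertwining on vectors
  have hint : ∀ c : Fin s → ℂ, Ψᵀ.mulVec (B.mulVec c) = B.mulVec (Λ.mulVec c) := by
    intro c
    rw [Matrix.mulVec_mulVec, Matrix.mulVec_mulVec, step1]
  ext μ
  simp only [Set.mem_setOf_eq, Set.mem_range, spec_iff]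
  constructor
  · rintro ⟨hμ, v, hv, hΨv⟩
    -- range equality
    have hWle : LinearMap.range B.mulVecLin ≤ LinearMap.range Ψᵀ.mulVecLin := by
      rintro w ⟨c, rfl⟩
      refine ⟨B.mulVec (fun i => (lam i)⁻¹ * c i), ?_⟩
      have hfc : (fun i => lam i * ((lam i)⁻¹ * c i)) = c := by
        funext i
        rw [← mul_assoc, mul_inv_cancel₀ (hlam_ne i), one_mul]
      rw [Matrix.mulVecLin_apply, Matrix.mulVecLin_apply, hint, hΛvec]
      exact congrArg B.mulVec hfc
    have hfinB : Module.finrank ℂ (LinearMap.range B.mulVecLin) = s := by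
      rw [LinearMap.finrank_range_of_inj (by rwa [show ⇑B.mulVecLin = B.mulVec from rfl])]
      simp
    have hfinΨ : Module.finrank ℂ (LinearMap.range Ψᵀ.mulVecLin) = s := by
      have : Ψᵀ.rank = s := by rw [Matrix.rank_transpose, hrank]
      rwa [Matrix.rank] at this
    have hWeq : LinearMap.range B.mulVecLin = LinearMap.range Ψᵀ.mulVecLin :=
      Submodule.eq_of_le_of_finrank_le hWle (by rw [hfinB, hfinΨ])
    have hvmem : v ∈ LinearMap.range B.mulVecLin := by
      rw [hWeq]
      refine ⟨μ⁻¹ • v, ?_⟩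
      rw [Matrix.mulVecLin_apply, Matrix.mulVec_smul, hΨv, smul_smul,
        inv_mul_cancel₀ hμ, one_smul]
    obtain ⟨c, hc⟩ := hvmem
    rw [Matrix.mulVecLin_apply] at hc
    have hc0 : c ≠ 0 := by
      rintro rfl
      rw [Matrix.mulVec_zero] at hc
      exact hv hc.symm
    have heig : Λ.mulVec c = μ • c := by
      apply hBinj
      rw [← hint, hc, hΨv, ← hc]
      funext i
      simp [Matrix.mulVec_smul]
    obtain ⟨i, hi⟩ := Function.ne_iff.mp hc0
    refine ⟨i, ?_⟩
    have := congrFun heig i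
    rw [hΛvec] at this
    simp only [Pi.smul_apply, smul_eq_mul] at this
    have : lam i = μ := mul_right_cancel₀ hi this
    exact this
  · rintro ⟨j, rfl⟩
    set e : Fin s → ℂ := Pi.single j 1 with hedef
    refine ⟨hlam_ne j, B.mulVec e, ?_, ?_⟩
    · intro h0
      have := hBinj (h0.trans (Matrix.mulVec_zero B).symm)
      exact (one_ne_zero : (1:ℂ) ≠ 0) (by simpa [hedef] using congrFun this j)
    · have hsingle : (fun i => lam i * e i) = lam j • e := by
        funext i
        by_cases hij : i = j <;> simp [hedef, hij, Pi.single_apply]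
      rw [hint, hΛvec, hsingle, Matrix.mulVec_smul]
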